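/- Let $K$ be an infinite field (or any field with at least $3$ elements suffices for small cases) and consider the Plücker relation: for any $A \subseteq [n]$ with $|A| = m-1$ and $B \subseteq [n]$ with $|B| = m+1$, and any $m \times n$ matrix $M$ over $K$, we have $\sum_{i \in B \setminus A} (-1)^{|[i]\cap A| + |[i]\cap B|} \det(M_{A \cup \{i\}}) \det(M_{B \setminus \{i\}}) = 0$, where $M_I$ denotes the $m \times m$ submatrix of $M$ with columns indexed by $I$ (in increasing order). -/

import Mathlib

open Matrix Finset

noncomputable def minor {K : Type*} [Field K] {m n : ℕ}
    (M : Matrix (Fin m) (Fin n) K) (I : Finset (Fin n)) : K :=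
  if h : I.card = m then (M.submatrix id (fun k => (I.orderIsoOfFin h k : Fin n))).det
  else 0

lemma idx_eq {α : Type*} [LinearOrder α] (s : Finset α) {k : ℕ} (h : s.card = k) (j : Fin k) :
    (s.filter (· < s.orderEmbOfFin h j)).card = j := by
  classical
  have himg : s.filter (· < s.orderEmbOfFin h j) = (Finset.Iio j).image (s.orderEmbOfFin h) := by
    ext x
    simp only [mem_filter, mem_image, mem_Iio]
    constructor
    · rintro ⟨hxs, hlt⟩
      have hx : x ∈ Set.range (s.orderEmbOfFin h) := by
        rw [range_orderEmbOfFin]; exact hxs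
      obtain ⟨y, rfl⟩ := hx
      exact ⟨y, (s.orderEmbOfFin h).lt_iff_lt.mp hlt, rfl⟩
    · rintro ⟨y, hy, rfl⟩
      exact ⟨orderEmbOfFin_mem _ _ _, (s.orderEmbOfFin h).strictMono hy⟩
  rw [himg, card_image_of_injective _ (s.orderEmbOfFin h).injective, Fin.card_Iio]

lemma erase_orderEmbOfFin {α : Type*} [LinearOrder α] [DecidableEq α] (s : Finset α) {k : ℕ}
    (h : s.card = k + 1) (j : Fin (k + 1)) (h' : (s.erase (s.orderEmbOfFin h j)).card = k)
    (x : Fin k) :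
    (s.erase (s.orderEmbOfFin h j)).orderEmbOfFin h' x = s.orderEmbOfFin h (j.succAbove x) := by
  have key := orderEmbOfFin_unique (s := s.erase (s.orderEmbOfFin h j)) h'
      (f := fun x => s.orderEmbOfFin h (j.succAbove x)) ?_ ?_
  · exact (congrFun key x).symm
  · intro y
    refine Finset.mem_erase.mpr ⟨?_, orderEmbOfFin_mem _ _ _⟩
    intro hcontra
    exact Fin.succAbove_ne j y ((s.orderEmbOfFin h).injective hcontra)
  · exact (s.orderEmbOfFin h).strictMono.comp (Fin.strictMono_succAbove j)

theorem plucker_aux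
    (K : Type*) [Field K] (k n : ℕ)
    (M : Matrix (Fin (k + 1)) (Fin n) K)
    (A B : Finset (Fin n)) (hAc : A.card = k) (hBc : B.card = k + 2) :
    ∑ i ∈ B \ A, (-1 : K) ^ ((A.filter (· ≤ i)).card + (B.filter (· ≤ i)).card) *
      minor M (insert i A) * minor M (B.erase i) = 0 := by
  set Ae := A.orderEmbOfFin hAc with hAe
  set Be := B.orderEmbOfFin hBc with hBe
  set C : Fin (k + 1) → K := fun r => det (M.submatrix r.succAbove Ae) with hC
  -- the dependency relation among the `B`-minors
  have dep : ∀ r : Fin (k + 1),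
      ∑ j : Fin (k + 2), (-1 : K) ^ (j : ℕ) * M r (Be j) * minor M (B.erase (Be j)) = 0 := by
    intro r
    set N : Matrix (Fin (k + 2)) (Fin (k + 2)) K :=
      M.submatrix (Fin.snoc (fun p : Fin (k+1) => p) r) Be with hN
    have hN0 : det N = 0 := by
      refine det_zero_of_row_eq (M := N) (i := Fin.castSucc r) (j := Fin.last (k + 1))
        (Fin.castSucc_lt_last r).ne ?_
      funext q
      simp [hN, Fin.snoc_castSucc, Fin.snoc_last]
    have hexp := det_succ_row N (Fin.last (k + 1))
    rw [hN0] at hexp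
    have herase : ∀ j : Fin (k + 2), (B.erase (Be j)).card = k + 1 := by
      intro j
      rw [Finset.card_erase_of_mem (orderEmbOfFin_mem _ _ _), hBc]; rfl
    have hterm : ∀ j : Fin (k + 2),
        (-1 : K) ^ ((Fin.last (k + 1) : ℕ) + (j : ℕ)) * N (Fin.last (k + 1)) j *
          det (N.submatrix (Fin.last (k + 1)).succAbove j.succAbove)
        = (-1 : K) ^ (k + 1) *
          ((-1 : K) ^ (j : ℕ) * M r (Be j) * minor M (B.erase (Be j))) := by
      intro j
      have h1 : N (Fin.last (k + 1)) j = M r (Be j) := by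
        simp [hN, Fin.snoc_last]
      have h2 : det (N.submatrix (Fin.last (k + 1)).succAbove j.succAbove)
          = minor M (B.erase (Be j)) := by
        rw [minor, dif_pos (herase j)]
        congr 1
        rw [hN]
        rw [Fin.succAbove_last]
        ext a b
        simp only [submatrix_apply, Fin.snoc_castSucc]
        congr 1
        rw [coe_orderIsoOfFin_apply]
        exact (erase_orderEmbOfFin B hBc j (herase j) b).symm
      rw [h1, h2, Fin.val_last, pow_add]
      ring
    rw [Finset.sum_congr rfl (fun j _ => hterm j), ← Finset.mul_sum] at hexp
    have hne : ((-1 : K) ^ (k + 1)) ≠ 0 := pow_ne_zero _ (by norm_num)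
    rcases mul_eq_zero.mp hexp.symm with h | h
    · exact absurd h hne
    · exact h
  -- expansion of the (A ∪ {i})-minor along the column i
  have hminor : ∀ i : Fin n, i ∉ A →
      minor M (insert i A) =
        ∑ r : Fin (k + 1), (-1 : K) ^ ((r : ℕ) + (A.filter (· < i)).card) * M r i * C r := by
    intro i hi
    have hcard : (insert i A).card = k + 1 := by
      rw [Finset.card_insert_of_notMem hi, hAc]
    obtain ⟨j₀, hj₀⟩ : ∃ j₀, (insert i A).orderEmbOfFin hcard j₀ = i := by
      have hx : i ∈ Set.range ((insert i A).orderEmbOfFin hcard) := by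
        rw [range_orderEmbOfFin]
        exact_mod_cast Finset.mem_insert_self i A
      exact hx
    have hj₀val : (j₀ : ℕ) = (A.filter (· < i)).card := by
      have hidx := idx_eq (insert i A) hcard j₀
      rw [hj₀] at hidx
      rw [← hidx]
      congr 1
      ext x
      simp only [mem_filter, Finset.mem_insert]
      constructor
      · rintro ⟨hx1 | hx1, hx2⟩
        · exact absurd hx2 (by simp [hx1])
        · exact ⟨hx1, hx2⟩
      · rintro ⟨hx1, hx2⟩
        exact ⟨Or.inr hx1, hx2⟩
    have hAe' : ∀ x : Fin k, Ae x = (insert i A).orderEmbOfFin hcard (j₀.succAbove x) := by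
      have key := orderEmbOfFin_unique (s := A) hAc
          (f := fun x => (insert i A).orderEmbOfFin hcard (j₀.succAbove x)) ?_ ?_
      · exact fun x => (congrFun key x).symm
      · intro y
        have hmem := orderEmbOfFin_mem (insert i A) hcard (j₀.succAbove y)
        rcases Finset.mem_insert.mp hmem with h | h
        · exact absurd (((insert i A).orderEmbOfFin hcard).injective (h.trans hj₀.symm))
            (Fin.succAbove_ne j₀ y)
        · exact h
      · exact ((insert i A).orderEmbOfFin hcard).strictMono.comp (Fin.strictMono_succAbove j₀)
    rw [minor, dif_pos hcard]
    have hmat : (M.submatrix id fun x => ((insert i A).orderIsoOfFin hcard x : Fin n))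
        = M.submatrix id ((insert i A).orderEmbOfFin hcard) := by
      ext a b
      simp [coe_orderIsoOfFin_apply]
    rw [hmat, det_succ_column (M.submatrix id ((insert i A).orderEmbOfFin hcard)) j₀]
    refine Finset.sum_congr rfl fun r _ => ?_
    have e1 : (M.submatrix id ((insert i A).orderEmbOfFin hcard)) r j₀ = M r i := by
      rw [submatrix_apply, id, hj₀]
    have e2 : (M.submatrix id ((insert i A).orderEmbOfFin hcard)).submatrix
        r.succAbove j₀.succAbove = M.submatrix r.succAbove Ae := by
      ext a b
      simp only [submatrix_apply, submatrix_submatrix, Function.comp_apply, id]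
      rw [hAe' b]
    rw [e1, e2, hj₀val]
  -- degenerate case: if i ∈ A, the corresponding expansion vanishes
  have hdeg : ∀ i : Fin n, i ∈ A →
      ∑ r : Fin (k + 1), (-1 : K) ^ ((r : ℕ) + (A.filter (· < i)).card) * M r i * C r = 0 := by
    intro i hi
    have hple : (A.filter (· < i)).card < k + 1 := by
      have := Finset.card_filter_le A (· < i)
      omega
    set p : Fin (k + 1) := ⟨(A.filter (· < i)).card, hple⟩ with hp
    set D : Matrix (Fin (k + 1)) (Fin (k + 1)) K :=
      M.submatrix id (p.insertNth i Ae) with hD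
    have hD0 : det D = 0 := by
      obtain ⟨y, hy⟩ : ∃ y, Ae y = i := by
        have hx : i ∈ Set.range Ae := by
          rw [hAe, range_orderEmbOfFin]; exact hi
        exact hx
      rw [← det_transpose]
      refine det_zero_of_row_eq (M := Dᵀ) (i := p) (j := p.succAbove y)
        (Fin.ne_succAbove p y) ?_
      funext q
      simp only [transpose_apply, hD, submatrix_apply, id]
      rw [Fin.insertNth_apply_same, Fin.insertNth_apply_succAbove, hy]
    have hexp := det_succ_column D p
    rw [hD0] at hexp
    rw [hexp]
    refine Finset.sum_congr rfl fun r _ => ?_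
    have e1 : D r p = M r i := by
      rw [hD, submatrix_apply]
      simp [Fin.insertNth_apply_same]
    have e2 : D.submatrix r.succAbove p.succAbove = M.submatrix r.succAbove Ae := by
      ext a b
      simp only [hD, submatrix_apply, submatrix_submatrix, Function.comp_apply, id]
      rw [Fin.insertNth_apply_succAbove]
    rw [e1, e2]
  rw [Finset.sum_subset (Finset.sdiff_subset : B \ A ⊆ B) ?hz]
  case hz =>
    intro i hiB hiNot
    have hiA : i ∈ A := by
      by_contra h
      exact hiNot (Finset.mem_sdiff.mpr ⟨hiB, h⟩)
    have hmz : minor M (insert i A) = 0 := by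
      rw [Finset.insert_eq_self.mpr hiA, minor, dif_neg (by omega)]
    rw [hmz, mul_zero, zero_mul]
  have step : ∀ i ∈ B,
      (-1 : K) ^ ((A.filter (· ≤ i)).card + (B.filter (· ≤ i)).card) *
        minor M (insert i A) * minor M (B.erase i)
      = ∑ r : Fin (k + 1), ((-1 : K) ^ (r : ℕ) * C r) *
          ((-1 : K) ^ ((B.filter (· < i)).card + 1) * M r i * minor M (B.erase i)) := by
    intro i hiB
    have hble : (B.filter (· ≤ i)).card = (B.filter (· < i)).card + 1 := by
      have hins : B.filter (· ≤ i) = insert i (B.filter (· < i)) := by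
        ext x
        simp only [mem_filter, Finset.mem_insert]
        constructor
        · rintro ⟨hx, hle⟩
          rcases lt_or_eq_of_le hle with h | h
          · exact Or.inr ⟨hx, h⟩
          · exact Or.inl h
        · rintro (rfl | ⟨hx, hlt⟩)
          · exact ⟨hiB, le_refl _⟩
          · exact ⟨hx, le_of_lt hlt⟩
      rw [hins, Finset.card_insert_of_notMem (by simp)]
    set X := minor M (B.erase i) with hX
    set b := (B.filter (· < i)).card with hb
    set pa := (A.filter (· < i)).card with hpa
    have hpp : ((-1 : K)) ^ pa * (-1) ^ pa = 1 := by
      rw [← pow_add]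
      exact Even.neg_one_pow ⟨pa, by ring⟩
    by_cases hiA : i ∈ A
    · have hmz : minor M (insert i A) = 0 := by
        rw [Finset.insert_eq_self.mpr hiA, minor, dif_neg (by omega)]
      rw [hmz, mul_zero, zero_mul]
      have h0 := hdeg i hiA
      calc (0 : K) = ((-1 : K) ^ (b + 1) * X * (-1) ^ pa) *
            ∑ r : Fin (k + 1), (-1 : K) ^ ((r : ℕ) + pa) * M r i * C r := by
            rw [h0, mul_zero]
        _ = _ := by
            rw [Finset.mul_sum]
            refine Finset.sum_congr rfl fun r _ => ?_
            rw [pow_add ((-1 : K)) (r : ℕ) pa]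
            linear_combination ((-1 : K) ^ (b + 1) * (-1 : K) ^ (r : ℕ) * M r i * C r * X) * hpp
    · have hale : (A.filter (· ≤ i)).card = pa := by
        rw [hpa]
        congr 1
        ext x
        simp only [mem_filter]
        constructor
        · rintro ⟨hx, hle⟩
          refine ⟨hx, lt_of_le_of_ne hle ?_⟩
          rintro rfl; exact hiA hx
        · rintro ⟨hx, hlt⟩; exact ⟨hx, le_of_lt hlt⟩
      rw [hminor i hiA, hale, hble, Finset.mul_sum, Finset.sum_mul]
      refine Finset.sum_congr rfl fun r _ => ?_
      rw [pow_add ((-1 : K)) pa (b + 1), pow_add ((-1 : K)) (r : ℕ) pa]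
      linear_combination ((-1 : K) ^ (b + 1) * (-1 : K) ^ (r : ℕ) * M r i * C r * X) * hpp
  rw [Finset.sum_congr rfl step, Finset.sum_comm]
  refine Finset.sum_eq_zero fun r _ => ?_
  rw [← Finset.mul_sum]
  have hin : ∑ i ∈ B, (-1 : K) ^ ((B.filter (· < i)).card + 1) * M r i * minor M (B.erase i)
      = 0 := by
    have hreix : ∑ i ∈ B,
          (-1 : K) ^ ((B.filter (· < i)).card + 1) * M r i * minor M (B.erase i)
        = ∑ j : Fin (k + 2), (-1 : K) ^ ((j : ℕ) + 1) * M r (Be j) * minor M (B.erase (Be j)) := by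
      refine (Finset.sum_bij (fun (j : Fin (k + 2)) _ => Be j) ?_ ?_ ?_ ?_).symm
      · intro j _; exact orderEmbOfFin_mem _ _ _
      · intro j1 _ j2 _ h; exact Be.injective h
      · intro x hx
        have hx' : x ∈ Set.range Be := by rw [hBe, range_orderEmbOfFin]; exact hx
        obtain ⟨j, rfl⟩ := hx'
        exact ⟨j, Finset.mem_univ j, rfl⟩
      · intro j _
        have hcnt : (B.filter (· < Be j)).card = (j : ℕ) := by
          rw [hBe]; exact idx_eq B hBc j
        rw [hcnt]
    rw [hreix]
    have hd := dep r
    calc ∑ j : Fin (k + 2), (-1 : K) ^ ((j : ℕ) + 1) * M r (Be j) * minor M (B.erase (Be j))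
        = -∑ j : Fin (k + 2), (-1 : K) ^ (j : ℕ) * M r (Be j) * minor M (B.erase (Be j)) := by
          rw [← Finset.sum_neg_distrib]
          refine Finset.sum_congr rfl fun j _ => ?_
          rw [pow_succ]
          ring
      _ = 0 := by rw [hd, neg_zero]
  rw [hin, mul_zero]


theorem plucker_relation
    (K : Type*) [Field K] [Infinite K] (m n : ℕ) (hm : m ≤ n)
    (M : Matrix (Fin m) (Fin n) K)
    (A B : Finset (Fin n)) (hA : A.card + 1 = m) (hB : B.card = m + 1) :
    ∑ i ∈ B \ A, (-1 : K) ^ ((A.filter (· ≤ i)).card + (B.filter (· ≤ i)).card) *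
      minor M (insert i A) * minor M (B.erase i) = 0 := by
  subst hA
  exact plucker_aux K A.card n M A B rfl (by omega)
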